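/- Let (A0,A1) be a quasi-Banach couple. Then there exist constants c, C > 0 such that for all x ∈ A0+A1 and all 0<t<1: c·(K(x,t,A0,A1) + t·K(x,1/t,A0,A1)) ≤ K(x,t,A0+A1,A0∩A1) ≤ C·(K(x,t,A0,A1) + t·K(x,1/t,A0,A1)), where K(x,t,A0+A1,A0∩A1) is the K-functional of the ordered couple formed by A0+A1 and A0∩A1. -/

import Mathlib

open Filter Topology MeasureTheory ENNReal Set
open scoped Classical

noncomputable section

/-- A quasi-Banach space realized on a submodule of an ambient real vector space:
a quasi-norm (with quasi-triangle constant `qc`) which is complete on the carrier. -/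
structure QuasiNormedSpaceOn (V : Type*) [AddCommGroup V] [Module ℝ V] where
  carrier : Submodule ℝ V
  nrm : V → ℝ
  qc : ℝ
  one_le_qc : 1 ≤ qc
  nrm_nonneg : ∀ x : V, 0 ≤ nrm x
  nrm_eq_zero : ∀ x ∈ carrier, (nrm x = 0 ↔ x = 0)
  nrm_smul : ∀ (c : ℝ), ∀ x ∈ carrier, nrm (c • x) = |c| * nrm x
  quasi_triangle : ∀ x ∈ carrier, ∀ y ∈ carrier, nrm (x + y) ≤ qc * (nrm x + nrm y)
  complete : ∀ f : ℕ → V, (∀ k, f k ∈ carrier) →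
    (∀ ε : ℝ, 0 < ε → ∃ N : ℕ, ∀ m ≥ N, ∀ n ≥ N, nrm (f m - f n) < ε) →
    ∃ x ∈ carrier, Filter.Tendsto (fun k => nrm (f k - x)) Filter.atTop (nhds 0)

variable {V : Type*} [AddCommGroup V] [Module ℝ V]

/-- The sum `B0 + B1` of two subsets of the ambient space. -/
def sumSetG (B0 B1 : Set V) : Set V := {x | ∃ b0 ∈ B0, ∃ b1 ∈ B1, x = b0 + b1}

/-- Peetre's K-functional for a (generalized) couple given by sets `B0, B1`
with quasi-norms `N0, N1`. -/
def Kgen (B0 B1 : Set V) (N0 N1 : V → ℝ) (t : ℝ) (x : V) : ℝ :=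
  sInf {r : ℝ | ∃ b0 ∈ B0, ∃ b1 ∈ B1, x = b0 + b1 ∧ r = N0 b0 + t * N1 b1}

/-- Quasi-norm of the sum space. -/
def sumNormG (B0 B1 : Set V) (N0 N1 : V → ℝ) (x : V) : ℝ := Kgen B0 B1 N0 N1 1 x

/-- The set `A0 + A1` for a couple. -/
def csum (S0 S1 : QuasiNormedSpaceOn V) : Set V :=
  sumSetG (S0.carrier : Set V) (S1.carrier : Set V)

/-- Peetre's K-functional `K(x, t, A0, A1)` of a couple. -/
def Kfun (S0 S1 : QuasiNormedSpaceOn V) (t : ℝ) (x : V) : ℝ :=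
  Kgen (S0.carrier : Set V) (S1.carrier : Set V) S0.nrm S1.nrm t x

/-- The quasi-norm `‖x‖_{A0+A1} = K(x,1,A0,A1)`. -/
def sumNorm (S0 S1 : QuasiNormedSpaceOn V) (x : V) : ℝ := Kfun S0 S1 1 x

/-- The set `A0 ∩ A1`. -/
def cinter (S0 S1 : QuasiNormedSpaceOn V) : Set V :=
  (S0.carrier : Set V) ∩ (S1.carrier : Set V)

/-- The quasi-norm `‖x‖_{A0∩A1} = max(‖x‖_{A0}, ‖x‖_{A1})`. -/
def interNorm (S0 S1 : QuasiNormedSpaceOn V) (x : V) : ℝ := max (S0.nrm x) (S1.nrm x)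

/-- The unit sphere `S(A0+A1)`. -/
def sumSphere (S0 S1 : QuasiNormedSpaceOn V) : Set V :=
  {x | x ∈ csum S0 S1 ∧ sumNorm S0 S1 x = 1}

/-- `K(A, t, A0, A1) = sup_{a ∈ A} K(a, t, A0, A1)`. -/
def KSet (S0 S1 : QuasiNormedSpaceOn V) (t : ℝ) (A : Set V) : ℝ :=
  sSup (Kfun S0 S1 t '' A)

/-- `(A0, A1)` is a quasi-Banach couple: both spaces are continuously embedded
in the (Hausdorff topological vector space) ambient space `V`. -/
structure IsQBCouple {V : Type*} [AddCommGroup V] [Module ℝ V] [TopologicalSpace V]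
    [IsTopologicalAddGroup V] [ContinuousSMul ℝ V] [T2Space V]
    (S0 S1 : QuasiNormedSpaceOn V) : Prop where
  embed0 : ∀ f : ℕ → V, (∀ k, f k ∈ S0.carrier) →
    Filter.Tendsto (fun k => S0.nrm (f k)) Filter.atTop (nhds 0) →
    Filter.Tendsto f Filter.atTop (nhds (0 : V))
  embed1 : ∀ f : ℕ → V, (∀ k, f k ∈ S1.carrier) →
    Filter.Tendsto (fun k => S1.nrm (f k)) Filter.atTop (nhds 0) →
    Filter.Tendsto f Filter.atTop (nhds (0 : V))

/-- `A` is not closed in `B` with respect to the quasi-norm `NB`: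
some sequence in `A` converges (w.r.t. `NB`) to a point of `B` outside `A`. -/
def NotClosedIn (A B : Set V) (NB : V → ℝ) : Prop :=
  ∃ (f : ℕ → V) (x : V), (∀ k, f k ∈ A) ∧ x ∈ B ∧ x ∉ A ∧
    Filter.Tendsto (fun k => NB (f k - x)) Filter.atTop (nhds 0)

/-- Membership in the real interpolation space `(B0, B1)_{θ,p}` (generalized couple).
For `p = ∞` it is the boundedness of `t^{-θ} K(x,t)`; for finite `p` finiteness of
`∫_0^∞ (t^{-θ}K(x,t))^p dt/t`. -/
def interpMemG (B0 B1 : Set V) (N0 N1 : V → ℝ) (θ : ℝ) (p : ℝ≥0∞) (x : V) : Prop :=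
  x ∈ sumSetG B0 B1 ∧
    if p = ⊤ then ∃ M : ℝ, ∀ t : ℝ, 0 < t → t ^ (-θ) * Kgen B0 B1 N0 N1 t x ≤ M
    else (∫⁻ t in Set.Ioi (0:ℝ),
        ENNReal.ofReal ((t ^ (-θ) * Kgen B0 B1 N0 N1 t x) ^ p.toReal / t)) < ⊤

/-- The quasi-norm of the real interpolation space `(B0, B1)_{θ,p}`. -/
def interpNormG (B0 B1 : Set V) (N0 N1 : V → ℝ) (θ : ℝ) (p : ℝ≥0∞) (x : V) : ℝ :=
  if p = ⊤ then sSup {r : ℝ | ∃ t : ℝ, 0 < t ∧ r = t ^ (-θ) * Kgen B0 B1 N0 N1 t x}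
  else ((∫⁻ t in Set.Ioi (0:ℝ),
      ENNReal.ofReal ((t ^ (-θ) * Kgen B0 B1 N0 N1 t x) ^ p.toReal / t)) ^ (1 / p.toReal)).toReal

/-- The real interpolation space as a set (generalized couple). -/
def interpSetG (B0 B1 : Set V) (N0 N1 : V → ℝ) (θ : ℝ) (p : ℝ≥0∞) : Set V :=
  {x | interpMemG B0 B1 N0 N1 θ p x}

/-- The real interpolation space `(A0, A1)_{θ,p}` of a couple, as a set. -/
def interpSet (S0 S1 : QuasiNormedSpaceOn V) (θ : ℝ) (p : ℝ≥0∞) : Set V :=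
  interpSetG (S0.carrier : Set V) (S1.carrier : Set V) S0.nrm S1.nrm θ p

/-- The quasi-norm of `(A0, A1)_{θ,p}`. -/
def interpNorm (S0 S1 : QuasiNormedSpaceOn V) (θ : ℝ) (p : ℝ≥0∞) (x : V) : ℝ :=
  interpNormG (S0.carrier : Set V) (S1.carrier : Set V) S0.nrm S1.nrm θ p x

/-- A quasi-Banach lattice of real sequences indexed by `ℤ`. -/
structure SeqLattice where
  mem : (ℤ → ℝ) → Prop
  nrm : (ℤ → ℝ) → ℝ
  qc : ℝ
  one_le_qc : 1 ≤ qc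
  zero_mem : mem 0
  add_mem : ∀ f g, mem f → mem g → mem (f + g)
  smul_mem : ∀ (c : ℝ) (f), mem f → mem (c • f)
  nrm_nonneg : ∀ f, 0 ≤ nrm f
  nrm_eq_zero : ∀ f, mem f → (nrm f = 0 ↔ f = 0)
  nrm_smul : ∀ (c : ℝ) (f), mem f → nrm (c • f) = |c| * nrm f
  quasi_triangle : ∀ f g, mem f → mem g → nrm (f + g) ≤ qc * (nrm f + nrm g)
  latticeConst : ℝ
  latticeConst_pos : 0 < latticeConst
  lattice : ∀ f g, (∀ n : ℤ, |f n| ≤ |g n|) → mem g →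
    mem f ∧ nrm f ≤ latticeConst * nrm g
  complete : ∀ F : ℕ → (ℤ → ℝ), (∀ k, mem (F k)) →
    (∀ ε : ℝ, 0 < ε → ∃ N : ℕ, ∀ m ≥ N, ∀ n ≥ N, nrm (F m - F n) < ε) →
    ∃ f, mem f ∧ Filter.Tendsto (fun k => nrm (F k - f)) Filter.atTop (nhds 0)

/-- The sequence `(K(a, 2^n, A0, A1))_{n ∈ ℤ}`. -/
def Kseq (S0 S1 : QuasiNormedSpaceOn V) (a : V) : ℤ → ℝ :=
  fun n => Kfun S0 S1 ((2:ℝ) ^ n) a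

end

set_option linter.unusedSectionVars false
section StmtHelpers

variable {V : Type*} [AddCommGroup V] [Module ℝ V]

private lemma Kgen_bddBelow (B0 B1 : Set V) (N0 N1 : V → ℝ) (t : ℝ) (x : V)
    (hN0 : ∀ y, 0 ≤ N0 y) (hN1 : ∀ y, 0 ≤ N1 y) (ht : 0 ≤ t) :
    BddBelow {r : ℝ | ∃ b0 ∈ B0, ∃ b1 ∈ B1, x = b0 + b1 ∧ r = N0 b0 + t * N1 b1} := by
  refine ⟨0, ?_⟩
  rintro r ⟨b0, _, b1, _, _, rfl⟩
  exact add_nonneg (hN0 _) (mul_nonneg ht (hN1 _))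

private lemma Kgen_nonneg (B0 B1 : Set V) (N0 N1 : V → ℝ) (t : ℝ) (x : V)
    (hN0 : ∀ y, 0 ≤ N0 y) (hN1 : ∀ y, 0 ≤ N1 y) (ht : 0 ≤ t) :
    0 ≤ Kgen B0 B1 N0 N1 t x := by
  apply Real.sInf_nonneg
  rintro r ⟨b0, _, b1, _, _, rfl⟩
  exact add_nonneg (hN0 _) (mul_nonneg ht (hN1 _))

private lemma Kgen_le (B0 B1 : Set V) (N0 N1 : V → ℝ) (t : ℝ) (x : V)
    (hN0 : ∀ y, 0 ≤ N0 y) (hN1 : ∀ y, 0 ≤ N1 y) (ht : 0 ≤ t)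
    {b0 b1 : V} (hb0 : b0 ∈ B0) (hb1 : b1 ∈ B1) (hx : x = b0 + b1) :
    Kgen B0 B1 N0 N1 t x ≤ N0 b0 + t * N1 b1 :=
  csInf_le (Kgen_bddBelow B0 B1 N0 N1 t x hN0 hN1 ht) ⟨b0, hb0, b1, hb1, hx, rfl⟩

private lemma le_Kgen (B0 B1 : Set V) (N0 N1 : V → ℝ) (t : ℝ) (x : V) {m : ℝ}
    (hx : x ∈ sumSetG B0 B1)
    (h : ∀ b0 ∈ B0, ∀ b1 ∈ B1, x = b0 + b1 → m ≤ N0 b0 + t * N1 b1) :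
    m ≤ Kgen B0 B1 N0 N1 t x := by
  obtain ⟨b0, hb0, b1, hb1, hxeq⟩ := hx
  refine le_csInf ⟨N0 b0 + t * N1 b1, b0, hb0, b1, hb1, hxeq, rfl⟩ ?_
  rintro r ⟨c0, hc0, c1, hc1, hxe, rfl⟩
  exact h c0 hc0 c1 hc1 hxe

private lemma Kgen_exists_lt (B0 B1 : Set V) (N0 N1 : V → ℝ) (t : ℝ) (x : V)
    (hx : x ∈ sumSetG B0 B1) {ε : ℝ} (hε : 0 < ε) :
    ∃ b0 ∈ B0, ∃ b1 ∈ B1, x = b0 + b1 ∧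
      N0 b0 + t * N1 b1 < Kgen B0 B1 N0 N1 t x + ε := by
  obtain ⟨b0, hb0, b1, hb1, hxeq⟩ := hx
  obtain ⟨r, ⟨c0, hc0, c1, hc1, hxe, rfl⟩, hlt⟩ :=
    Real.lt_sInf_add_pos (s := {r : ℝ | ∃ b0 ∈ B0, ∃ b1 ∈ B1, x = b0 + b1 ∧
      r = N0 b0 + t * N1 b1}) ⟨N0 b0 + t * N1 b1, b0, hb0, b1, hb1, hxeq, rfl⟩ hε
  exact ⟨c0, hc0, c1, hc1, hxe, hlt⟩

private lemma nrm_neg' (S : QuasiNormedSpaceOn V) {y : V} (hy : y ∈ S.carrier) :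
    S.nrm (-y) = S.nrm y := by
  have := S.nrm_smul (-1) y hy
  simpa using this

private lemma nrm_sub' (S : QuasiNormedSpaceOn V) {a b : V}
    (ha : a ∈ S.carrier) (hb : b ∈ S.carrier) :
    S.nrm (a - b) ≤ S.qc * (S.nrm a + S.nrm b) := by
  have h := S.quasi_triangle a ha (-b) (S.carrier.neg_mem hb)
  rw [nrm_neg' S hb] at h
  simpa [sub_eq_add_neg] using h

private lemma sumNorm_nonneg (S0 S1 : QuasiNormedSpaceOn V) (y : V) :
    0 ≤ sumNorm S0 S1 y :=
  Kgen_nonneg _ _ _ _ _ _ (fun z => S0.nrm_nonneg z) (fun z => S1.nrm_nonneg z) zero_le_one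

private lemma interNorm_nonneg (S0 S1 : QuasiNormedSpaceOn V) (y : V) :
    0 ≤ interNorm S0 S1 y :=
  le_max_of_le_left (S0.nrm_nonneg y)

end StmtHelpers

set_option maxHeartbeats 1000000 in
/-- For any quasi-Banach couple `(A0,A1)` there are constants
`c, C > 0` with `c (K(x,t,A0,A1) + t K(x,1/t,A0,A1)) ≤ K(x,t,A0+A1,A0∩A1)
≤ C (K(x,t,A0,A1) + t K(x,1/t,A0,A1))` for all `x ∈ A0+A1` and `0<t<1`. -/

theorem stmt18 {V : Type*} [AddCommGroup V] [Module ℝ V] [TopologicalSpace V]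
    [IsTopologicalAddGroup V] [ContinuousSMul ℝ V] [T2Space V]
    (S0 S1 : QuasiNormedSpaceOn V) (hcouple : IsQBCouple S0 S1) :
    ∃ c C : ℝ, 0 < c ∧ 0 < C ∧ ∀ x ∈ csum S0 S1, ∀ t : ℝ, 0 < t → t < 1 →
      c * (Kfun S0 S1 t x + t * Kfun S0 S1 (1/t) x) ≤
        Kgen (csum S0 S1) (cinter S0 S1) (sumNorm S0 S1) (interNorm S0 S1) t x ∧
      Kgen (csum S0 S1) (cinter S0 S1) (sumNorm S0 S1) (interNorm S0 S1) t x ≤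
        C * (Kfun S0 S1 t x + t * Kfun S0 S1 (1/t) x) := by
  classical
  set q : ℝ := max S0.qc S1.qc with hqdef
  have hq1 : 1 ≤ q := le_trans S0.one_le_qc (le_max_left _ _)
  have hq0 : (0:ℝ) < q := lt_of_lt_of_le one_pos hq1
  refine ⟨1/(2*q), 1+q, by positivity, by positivity, ?_⟩
  intro x hx t ht ht1
  have hN0 : ∀ y, 0 ≤ S0.nrm y := S0.nrm_nonneg
  have hN1 : ∀ y, 0 ≤ S1.nrm y := S1.nrm_nonneg
  have hNs : ∀ y, 0 ≤ sumNorm S0 S1 y := sumNorm_nonneg S0 S1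
  have hNi : ∀ y, 0 ≤ interNorm S0 S1 y := interNorm_nonneg S0 S1
  have ht0 : (0:ℝ) ≤ t := ht.le
  have htinv : (0:ℝ) < 1/t := by positivity
  have hKt : 0 ≤ Kfun S0 S1 t x := Kgen_nonneg _ _ _ _ _ _ hN0 hN1 ht0
  have hKt' : 0 ≤ Kfun S0 S1 (1/t) x := Kgen_nonneg _ _ _ _ _ _ hN0 hN1 htinv.le
  have hxG : x ∈ sumSetG (csum S0 S1) (cinter S0 S1) :=
    ⟨x, hx, 0, ⟨S0.carrier.zero_mem, S1.carrier.zero_mem⟩, (add_zero x).symm⟩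
  constructor
  · -- lower bound
    refine le_Kgen _ _ _ _ _ _ hxG ?_
    rintro b hb d ⟨hd0, hd1⟩ hxbd
    rw [one_div_mul_eq_div, div_le_iff₀ (show (0:ℝ) < 2*q by positivity)]
    refine le_of_forall_pos_le_add fun ε hε => ?_
    obtain ⟨b0, hb0, b1, hb1, hbeq, hbb⟩ :=
      Kgen_exists_lt _ _ S0.nrm S1.nrm 1 b hb (show 0 < ε/(2*q) by positivity)
    have hbb : S0.nrm b0 + 1 * S1.nrm b1 < sumNorm S0 S1 b + ε/(2*q) := hbb
    have h1 : Kfun S0 S1 t x ≤ S0.nrm b0 + t * S1.nrm (b1 + d) :=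
      Kgen_le _ _ _ _ _ _ hN0 hN1 ht0 hb0 (S1.carrier.add_mem hb1 hd1)
        (by rw [hxbd, hbeq]; abel)
    have h2 : Kfun S0 S1 (1/t) x ≤ S0.nrm (b0 + d) + (1/t) * S1.nrm b1 :=
      Kgen_le _ _ _ _ _ _ hN0 hN1 htinv.le (S0.carrier.add_mem hb0 hd0) hb1
        (by rw [hxbd, hbeq]; abel)
    have h2' : t * Kfun S0 S1 (1/t) x ≤ t * S0.nrm (b0 + d) + S1.nrm b1 := by
      have h := mul_le_mul_of_nonneg_left h2 ht0
      have he : t * ((1/t) * S1.nrm b1) = S1.nrm b1 := by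
        field_simp
      nlinarith [h, he]
    have hX1 : S1.nrm (b1 + d) ≤ q * (S1.nrm b1 + interNorm S0 S1 d) := by
      have := S1.quasi_triangle b1 hb1 d hd1
      have h2q : S1.qc ≤ q := le_max_right _ _
      exact this.trans (mul_le_mul h2q
        (add_le_add_right (le_max_right (S0.nrm d) (S1.nrm d)) _)
        (add_nonneg (hN1 _) (hN1 _)) hq0.le)
    have hX0 : S0.nrm (b0 + d) ≤ q * (S0.nrm b0 + interNorm S0 S1 d) := by
      have := S0.quasi_triangle b0 hb0 d hd0
      have h2q : S0.qc ≤ q := le_max_left _ _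
      exact this.trans (mul_le_mul h2q
        (add_le_add_right (le_max_left (S0.nrm d) (S1.nrm d)) _)
        (add_nonneg (hN0 _) (hN0 _)) hq0.le)
    have P1 := mul_le_mul_of_nonneg_left hX1 ht0
    have P2 := mul_le_mul_of_nonneg_left hX0 ht0
    have P3 : t * (q * S1.nrm b1) ≤ q * S1.nrm b1 :=
      mul_le_of_le_one_left (mul_nonneg hq0.le (hN1 _)) ht1.le
    have P4 : t * (q * S0.nrm b0) ≤ q * S0.nrm b0 :=
      mul_le_of_le_one_left (mul_nonneg hq0.le (hN0 _)) ht1.le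
    have P5 : 0 ≤ (q-1) * (S0.nrm b0 + S1.nrm b1) :=
      mul_nonneg (by linarith) (add_nonneg (hN0 _) (hN1 _))
    have P6 : 2*q*(S0.nrm b0 + 1 * S1.nrm b1) < 2*q*(sumNorm S0 S1 b + ε/(2*q)) :=
      mul_lt_mul_of_pos_left hbb (by positivity)
    have P7 : 2*q*(sumNorm S0 S1 b + ε/(2*q)) = 2*q*(sumNorm S0 S1 b) + ε := by
      field_simp
    have hI0 : 0 ≤ interNorm S0 S1 d := hNi d
    nlinarith [P1, P2, P3, P4, P5, P6, P7, h1, h2', mul_nonneg ht0 hI0,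
      mul_nonneg (mul_nonneg ht0 hq0.le) hI0]
  · -- upper bound
    refine le_of_forall_pos_le_add fun δ hδ => ?_
    set ε : ℝ := δ/(2*(1+q)) with hεdef
    have hε : 0 < ε := by rw [hεdef]; positivity
    obtain ⟨a0, ha0, a1, ha1, hxa, hKa⟩ :=
      Kgen_exists_lt _ _ S0.nrm S1.nrm t x hx hε
    obtain ⟨a0', ha0', a1', ha1', hxa', hKa'⟩ :=
      Kgen_exists_lt _ _ S0.nrm S1.nrm (1/t) x hx hε
    have hKa : S0.nrm a0 + t * S1.nrm a1 < Kfun S0 S1 t x + ε := hKa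
    have hKa' : S0.nrm a0' + (1/t) * S1.nrm a1' < Kfun S0 S1 (1/t) x + ε := hKa'
    have hd_eq : a1 - a1' = a0' - a0 := by
      have h : a0 + a1 = a0' + a1' := hxa.symm.trans hxa'
      rw [sub_eq_sub_iff_add_eq_add, add_comm]
      exact h
    have hd0 : a1 - a1' ∈ S0.carrier := by
      rw [hd_eq]; exact S0.carrier.sub_mem ha0' ha0
    have hd1 : a1 - a1' ∈ S1.carrier := S1.carrier.sub_mem ha1 ha1'
    have hbmem : a0 + a1' ∈ csum S0 S1 := ⟨a0, ha0, a1', ha1', rfl⟩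
    have hKsum : Kgen (csum S0 S1) (cinter S0 S1) (sumNorm S0 S1) (interNorm S0 S1) t x
        ≤ sumNorm S0 S1 (a0 + a1') + t * interNorm S0 S1 (a1 - a1') :=
      Kgen_le _ _ _ _ _ _ hNs hNi ht0 hbmem ⟨hd0, hd1⟩ (by rw [hxa]; abel)
    have hSb : sumNorm S0 S1 (a0 + a1') ≤ S0.nrm a0 + 1 * S1.nrm a1' :=
      Kgen_le _ _ _ _ _ _ hN0 hN1 zero_le_one ha0 ha1' rfl
    -- bounds from near-optimal decompositions
    have ha0b : S0.nrm a0 ≤ Kfun S0 S1 t x + ε := by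
      linarith [mul_nonneg ht0 (hN1 a1)]
    have ha1b : t * S1.nrm a1 ≤ Kfun S0 S1 t x + ε := by
      linarith [hN0 a0]
    have ha0'b : S0.nrm a0' ≤ Kfun S0 S1 (1/t) x + ε := by
      linarith [mul_nonneg htinv.le (hN1 a1')]
    have ha1'b : S1.nrm a1' ≤ t * (Kfun S0 S1 (1/t) x + ε) := by
      have h5 : (1/t) * S1.nrm a1' ≤ Kfun S0 S1 (1/t) x + ε := by
        linarith [hN0 a0']
      have := mul_le_mul_of_nonneg_left h5 ht0
      have he : t * ((1/t) * S1.nrm a1') = S1.nrm a1' := by field_simp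
      nlinarith [this, he]
    have htε : t * ε ≤ ε := mul_le_of_le_one_left hε.le ht1.le
    have hIbnd : t * interNorm S0 S1 (a1 - a1') ≤
        q * (Kfun S0 S1 t x + t * Kfun S0 S1 (1/t) x) + 2*q*ε := by
      have case0 : t * S0.nrm (a1 - a1') ≤
          q * (Kfun S0 S1 t x + t * Kfun S0 S1 (1/t) x) + 2*q*ε := by
        have s0 : S0.nrm (a1 - a1') ≤ q * (S0.nrm a0' + S0.nrm a0) := by
          rw [hd_eq]
          exact (nrm_sub' S0 ha0' ha0).trans
            (mul_le_mul_of_nonneg_right (le_max_left _ _) (add_nonneg (hN0 _) (hN0 _)))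
        have H1 := mul_le_mul_of_nonneg_left s0 ht0
        have H2 := mul_le_mul_of_nonneg_left ha0'b (mul_nonneg ht0 hq0.le)
        have H3 : t * (q * S0.nrm a0) ≤ q * S0.nrm a0 :=
          mul_le_of_le_one_left (mul_nonneg hq0.le (hN0 _)) ht1.le
        have H4 := mul_le_mul_of_nonneg_left ha0b hq0.le
        have H5 := mul_le_mul_of_nonneg_left htε hq0.le
        nlinarith [H1, H2, H3, H4, H5]
      have case1 : t * S1.nrm (a1 - a1') ≤
          q * (Kfun S0 S1 t x + t * Kfun S0 S1 (1/t) x) + 2*q*ε := by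
        have s1 : S1.nrm (a1 - a1') ≤ q * (S1.nrm a1 + S1.nrm a1') := by
          exact (nrm_sub' S1 ha1 ha1').trans
            (mul_le_mul_of_nonneg_right (le_max_right _ _) (add_nonneg (hN1 _) (hN1 _)))
        have H1 := mul_le_mul_of_nonneg_left s1 ht0
        have H2 := mul_le_mul_of_nonneg_left ha1b hq0.le
        have H3 := mul_le_mul_of_nonneg_left ha1'b (mul_nonneg ht0 hq0.le)
        have H4 : t * (t * (Kfun S0 S1 (1/t) x + ε)) ≤ t * (Kfun S0 S1 (1/t) x + ε) :=
          mul_le_of_le_one_left (mul_nonneg ht0 (by linarith)) ht1.le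
        have H5 := mul_le_mul_of_nonneg_left H4 hq0.le
        have H6 := mul_le_mul_of_nonneg_left htε hq0.le
        nlinarith [H1, H2, H3, H5, H6]
      rcases le_total (S0.nrm (a1 - a1')) (S1.nrm (a1 - a1')) with hc | hc
      · rw [interNorm, max_eq_right hc]; exact case1
      · rw [interNorm, max_eq_left hc]; exact case0
    have hδε : (2 + 2*q) * ε = δ := by
      rw [hεdef]; field_simp
    nlinarith [hKsum, hSb, hIbnd, ha0b, ha1'b, htε, hε.le, hδε,
      mul_nonneg ht0 hε.le]
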